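/- Fix n ≥ 1, ℓ ∈ {0,…,n}, a ∈ ℙ^1(R_n) and b ∈ R_n^2. The segment S_a = {t·can_n(a) + b : t ∈ π^ℓ R_n} has cardinality exactly q^{n-ℓ}. Moreover, for a, b ∈ ℙ^1(R_n) and any two segments S_a, S_b of length q^{-ℓ} in directions a and b, the intersection S_a ∩ S_b is either empty or has cardinality q^{min(n-ℓ, v_n(a,b))}, where v_n(a,b) is the largest v ≤ n with sp_{n,v}(a) = sp_{n,v}(b). -/

import Mathlib

set_option linter.unusedSectionVars false
set_option maxHeartbeats 1000000

section Aux

variable {R : Type*} [CommRing R] [IsDomain R] [IsDiscreteValuationRing R]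

lemma aux_dvd_cancel {π : R} (hπ : Irreducible π) {j k : ℕ} (hjk : j ≤ k) (r : R) :
    π ^ k ∣ π ^ j * r ↔ π ^ (k - j) ∣ r := by
  constructor
  · rintro ⟨c, hc⟩
    refine ⟨c, ?_⟩
    have hπ0 : (π : R) ^ j ≠ 0 := pow_ne_zero _ hπ.ne_zero
    apply mul_left_cancel₀ hπ0
    rw [hc, ← mul_assoc, ← pow_add]
    congr 2
    omega
  · rintro ⟨c, hc⟩
    exact ⟨c, by rw [hc, ← mul_assoc, ← pow_add]; congr 2; omega⟩

lemma aux_mk_eq_zero {π : R} (n : ℕ) (r : R) :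
    Ideal.Quotient.mk ((Ideal.span {π} : Ideal R) ^ n) r = 0 ↔ π ^ n ∣ r := by
  rw [Ideal.Quotient.eq_zero_iff_mem, Ideal.span_singleton_pow, Ideal.mem_span_singleton]

/-- The multiplication-by-`π^m` map `R/(π)^(n-m) → R/(π)^n`. -/
noncomputable def mulPow (π : R) (n m : ℕ) :
    (R ⧸ (Ideal.span {π} : Ideal R) ^ (n - m)) →ₗ[R] (R ⧸ (Ideal.span {π} : Ideal R) ^ n) :=
  Submodule.liftQ _ ((π ^ m) • ((Ideal.span {π} : Ideal R) ^ n).mkQ) (by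
    intro x hx
    rw [Ideal.span_singleton_pow, Ideal.mem_span_singleton] at hx
    obtain ⟨c, rfl⟩ := hx
    simp only [LinearMap.mem_ker, LinearMap.smul_apply, Submodule.mkQ_apply]
    rw [← Submodule.Quotient.mk_smul, smul_eq_mul, Submodule.Quotient.mk_eq_zero]
    rw [Ideal.span_singleton_pow, Ideal.mem_span_singleton]
    rw [← mul_assoc, ← pow_add]
    exact dvd_mul_of_dvd_left (pow_dvd_pow π (by omega)) c)

lemma mulPow_mk (π : R) (n m : ℕ) (r : R) :
    mulPow π n m (Ideal.Quotient.mk _ r) =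
      (Ideal.Quotient.mk ((Ideal.span {π} : Ideal R) ^ n) π) ^ m * Ideal.Quotient.mk _ r := by
  show mulPow π n m (Submodule.Quotient.mk r) = _
  rw [mulPow, Submodule.liftQ_apply]
  simp only [LinearMap.smul_apply, Submodule.mkQ_apply]
  rw [← Submodule.Quotient.mk_smul, smul_eq_mul, Ideal.Quotient.mk_eq_mk, ← map_pow, ← map_mul]

lemma mulPow_injective {π : R} (hπ : Irreducible π) {n m : ℕ} (hm : m ≤ n) :
    Function.Injective (mulPow (R := R) π n m) := by
  rw [← LinearMap.ker_eq_bot, mulPow, Submodule.ker_liftQ_eq_bot]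
  intro x hx
  simp only [LinearMap.mem_ker, LinearMap.smul_apply, Submodule.mkQ_apply] at hx
  rw [← Submodule.Quotient.mk_smul, smul_eq_mul, Submodule.Quotient.mk_eq_zero,
    Ideal.span_singleton_pow, Ideal.mem_span_singleton] at hx
  rw [Ideal.span_singleton_pow, Ideal.mem_span_singleton]
  exact (aux_dvd_cancel hπ hm x).mp hx


/-- Cardinality of a "segment". -/
lemma card_segment (π : R) (hπ : Irreducible π) {n m : ℕ} (hm : m ≤ n)
    (c b : Fin 2 → R ⧸ (Ideal.span {π} : Ideal R) ^ n) (j : Fin 2) (hcj : c j = 1) :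
    Nat.card {x : Fin 2 → R ⧸ (Ideal.span {π} : Ideal R) ^ n |
        ∃ s, x = fun i => (Ideal.Quotient.mk _ π) ^ m * s * c i + b i} =
      Nat.card (R ⧸ (Ideal.span {π} : Ideal R) ^ (n - m)) := by
  set G : (R ⧸ (Ideal.span {π} : Ideal R) ^ (n - m)) →
      (Fin 2 → R ⧸ (Ideal.span {π} : Ideal R) ^ n) :=
    fun y => fun i => mulPow π n m y * c i + b i with hG
  have hGinj : Function.Injective G := by
    intro y z hyz
    have := congrFun hyz j
    simp only [hG, hcj, mul_one] at this
    exact mulPow_injective hπ hm (add_right_cancel this)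
  have hrange : {x : Fin 2 → R ⧸ (Ideal.span {π} : Ideal R) ^ n |
      ∃ s, x = fun i => (Ideal.Quotient.mk _ π) ^ m * s * c i + b i} = Set.range G := by
    ext x
    constructor
    · rintro ⟨s, rfl⟩
      obtain ⟨r, rfl⟩ := Ideal.Quotient.mk_surjective s
      exact ⟨Ideal.Quotient.mk _ r, by funext i; simp [hG, mulPow_mk]⟩
    · rintro ⟨y, rfl⟩
      obtain ⟨r, rfl⟩ := Ideal.Quotient.mk_surjective y
      exact ⟨Ideal.Quotient.mk _ r, by funext i; simp [hG, mulPow_mk]⟩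
  rw [hrange]
  exact Nat.card_range_of_injective hGinj

/-- Cardinality of quotients of powers. -/
lemma card_quot (π : R) (hπ : Irreducible π) [Finite (IsLocalRing.ResidueField R)]
    (m : ℕ) :
    Nat.card (R ⧸ (Ideal.span {π} : Ideal R) ^ m) =
      Nat.card (IsLocalRing.ResidueField R) ^ m := by
  induction m with
  | zero =>
    rw [pow_zero, pow_zero, Ideal.one_eq_top]
    have : Subsingleton (R ⧸ (⊤ : Ideal R)) := Ideal.Quotient.subsingleton_iff.mpr rfl
    exact Nat.card_eq_one_iff_unique.mpr ⟨this, ⟨0⟩⟩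
  | succ m ih =>
    set I : Ideal R := Ideal.span {π} with hI
    have hle : I ^ (m+1) ≤ I ^ m := Ideal.pow_le_pow_right (Nat.le_succ m)
    set f : (R ⧸ I ^ (m+1)) →+ (R ⧸ I ^ m) :=
      (Ideal.Quotient.factor hle).toAddMonoidHom with hf
    have hfmk : ∀ r : R, f (Ideal.Quotient.mk _ r) = Ideal.Quotient.mk _ r :=
      fun r => Ideal.Quotient.factor_mk hle r
    have hfs : Function.Surjective f := by
      intro y; obtain ⟨r, rfl⟩ := Ideal.Quotient.mk_surjective y
      exact ⟨Ideal.Quotient.mk _ r, hfmk r⟩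
    have e1 : Nat.card ((R ⧸ I^(m+1)) ⧸ f.ker) = Nat.card (R ⧸ I ^ m) :=
      Nat.card_congr (QuotientAddGroup.quotientKerEquivOfSurjective f hfs).toEquiv
    set w : (R ⧸ I ^ (m + 1 - m)) → f.ker := fun y =>
      ⟨mulPow π (m+1) m y, by
        obtain ⟨r, rfl⟩ := Ideal.Quotient.mk_surjective y
        rw [AddMonoidHom.mem_ker, mulPow_mk, ← map_pow, ← map_mul, hfmk, aux_mk_eq_zero]
        exact Dvd.intro r rfl⟩ with hw
    have hwbij : Function.Bijective w := by
      constructor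
      · intro y z hyz
        exact mulPow_injective hπ (Nat.le_succ m) (Subtype.ext_iff.mp hyz)
      · rintro ⟨x, hx⟩
        obtain ⟨e, rfl⟩ := Ideal.Quotient.mk_surjective x
        rw [AddMonoidHom.mem_ker, hfmk, aux_mk_eq_zero] at hx
        obtain ⟨r, rfl⟩ := hx
        exact ⟨Ideal.Quotient.mk _ r, Subtype.ext (by rw [hw]; simp only; rw [mulPow_mk, ← map_pow, ← map_mul])⟩
    have e2 : Nat.card f.ker = Nat.card (IsLocalRing.ResidueField R) := by
      rw [← Nat.card_congr (Equiv.ofBijective w hwbij)]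
      have h1 : I ^ (m + 1 - m) = IsLocalRing.maximalIdeal R := by
        rw [show m + 1 - m = 1 by omega, pow_one, hI, hπ.maximalIdeal_eq]
      exact Nat.card_congr (Ideal.quotEquivOfEq h1).toEquiv
    rw [AddSubgroup.card_eq_card_quotient_mul_card_addSubgroup f.ker, e1, e2, ih, pow_succ]


lemma inter_eq (π : R) {n ℓ v : ℕ} (hℓ : ℓ ≤ n) (hv : v ≤ n)
    (a a' b b' : Fin 2 → R ⧸ (Ideal.span {π} : Ideal R) ^ n)
    (p : Fin 2) (hap : a p = 1) (hap' : a' p = 1)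
    (H1 : ∀ i, (Ideal.Quotient.mk ((Ideal.span {π} : Ideal R) ^ n) π) ^ (n - v) * (a i - a' i) = 0)
    (H2 : ∀ t : R ⧸ (Ideal.span {π} : Ideal R) ^ n, (∀ i, t * (a i - a' i) = 0) →
      ∃ s, t = (Ideal.Quotient.mk _ π) ^ (n - v) * s)
    (x₀ : Fin 2 → R ⧸ (Ideal.span {π} : Ideal R) ^ n)
    (s₀ : R ⧸ (Ideal.span {π} : Ideal R) ^ n)
    (hx₀ : x₀ = fun i => (Ideal.Quotient.mk _ π) ^ ℓ * s₀ * a i + b i)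
    (s₀' : R ⧸ (Ideal.span {π} : Ideal R) ^ n)
    (hx₀' : x₀ = fun i => (Ideal.Quotient.mk _ π) ^ ℓ * s₀' * a' i + b' i) :
    {x : Fin 2 → R ⧸ (Ideal.span {π} : Ideal R) ^ n |
        ∃ s, x = fun i => (Ideal.Quotient.mk _ π) ^ ℓ * s * a i + b i} ∩
      {x | ∃ s, x = fun i => (Ideal.Quotient.mk _ π) ^ ℓ * s * a' i + b' i} =
    {x | ∃ s, x = fun i => (Ideal.Quotient.mk _ π) ^ (max ℓ (n - v)) * s * a i + x₀ i} := by
  set P : R ⧸ (Ideal.span {π} : Ideal R) ^ n := Ideal.Quotient.mk _ π with hP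
  set M := max ℓ (n - v) with hM
  have hpow1 : P ^ ℓ * P ^ (M - ℓ) = P ^ M := by
    rw [← pow_add]; congr 1; omega
  have hPM0 : ∀ (i : Fin 2) (s : R ⧸ (Ideal.span {π} : Ideal R) ^ n),
      P ^ M * s * (a i - a' i) = 0 := by
    intro i s
    rw [show M = (n - v) + (M - (n - v)) from by omega, pow_add]
    linear_combination (P ^ (M - (n - v)) * s) * H1 i
  ext x
  constructor
  · rintro ⟨⟨s₁, h1⟩, ⟨s₁', h1'⟩⟩
    have key : ∀ i, x i - x₀ i = P ^ ℓ * (s₁ - s₀) * a i := by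
      intro i
      have e1 := congrFun h1 i
      have e2 := congrFun hx₀ i
      linear_combination e1 - e2
    have key' : ∀ i, x i - x₀ i = P ^ ℓ * (s₁' - s₀') * a' i := by
      intro i
      have e1 := congrFun h1' i
      have e2 := congrFun hx₀' i
      linear_combination e1 - e2
    have htt : P ^ ℓ * (s₁ - s₀) = P ^ ℓ * (s₁' - s₀') := by
      have k1 := key p; have k2 := key' p
      rw [hap] at k1; rw [hap'] at k2
      linear_combination k2 - k1
    have hann : ∀ i, (P ^ ℓ * (s₁ - s₀)) * (a i - a' i) = 0 := by
      intro i
      have k1 := key i; have k2 := key' i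
      linear_combination k2 - k1 - (a' i) * htt
    obtain ⟨s₂, hs₂⟩ := H2 _ hann
    rcases max_choice ℓ (n - v) with hMc | hMc
    · refine ⟨s₁ - s₀, funext fun i => ?_⟩
      rw [hM, hMc]
      linear_combination key i
    · refine ⟨s₂, funext fun i => ?_⟩
      rw [hM, hMc]
      linear_combination key i + (a i) * hs₂
  · rintro ⟨s, rfl⟩
    constructor
    · refine ⟨s₀ + P ^ (M - ℓ) * s, funext fun i => ?_⟩
      have e2 := congrFun hx₀ i
      linear_combination e2 - (s * a i) * hpow1
    · refine ⟨s₀' + P ^ (M - ℓ) * s, funext fun i => ?_⟩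
      have e2 := congrFun hx₀' i
      linear_combination e2 - (s * a' i) * hpow1 + hPM0 i s

lemma inter_singleton (π : R) (hπ : Irreducible π) {n ℓ : ℕ} (hn : 1 ≤ n)
    (a a' b b' : Fin 2 → R ⧸ (Ideal.span {π} : Ideal R) ^ n)
    (ha0 : a 0 = 1) (ha1' : a' 1 = 1) (ha0' : ¬IsUnit (a' 0))
    (x₀ : Fin 2 → R ⧸ (Ideal.span {π} : Ideal R) ^ n)
    (s₀ : R ⧸ (Ideal.span {π} : Ideal R) ^ n)
    (hx₀ : x₀ = fun i => (Ideal.Quotient.mk _ π) ^ ℓ * s₀ * a i + b i)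
    (s₀' : R ⧸ (Ideal.span {π} : Ideal R) ^ n)
    (hx₀' : x₀ = fun i => (Ideal.Quotient.mk _ π) ^ ℓ * s₀' * a' i + b' i) :
    {x : Fin 2 → R ⧸ (Ideal.span {π} : Ideal R) ^ n |
        ∃ s, x = fun i => (Ideal.Quotient.mk _ π) ^ ℓ * s * a i + b i} ∩
      {x | ∃ s, x = fun i => (Ideal.Quotient.mk _ π) ^ ℓ * s * a' i + b' i} = {x₀} := by
  have hne : ((Ideal.span {π} : Ideal R) ^ n) ≠ ⊤ := by
    rw [Ideal.span_singleton_pow, Ne, Ideal.span_singleton_eq_top]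
    intro h
    exact hπ.not_isUnit ((isUnit_pow_iff (by omega : n ≠ 0)).mp h)
  haveI : Nontrivial (R ⧸ (Ideal.span {π} : Ideal R) ^ n) := Ideal.Quotient.nontrivial_iff.mpr hne
  haveI : IsLocalRing (R ⧸ (Ideal.span {π} : Ideal R) ^ n) :=
    IsLocalRing.of_surjective' (Ideal.Quotient.mk _) Ideal.Quotient.mk_surjective
  set P : R ⧸ (Ideal.span {π} : Ideal R) ^ n := Ideal.Quotient.mk _ π with hP
  ext x
  constructor
  · rintro ⟨⟨s₁, h1⟩, ⟨s₁', h1'⟩⟩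
    have key : ∀ i, x i - x₀ i = P ^ ℓ * (s₁ - s₀) * a i := by
      intro i
      have e1 := congrFun h1 i; have e2 := congrFun hx₀ i
      linear_combination e1 - e2
    have key' : ∀ i, x i - x₀ i = P ^ ℓ * (s₁' - s₀') * a' i := by
      intro i
      have e1 := congrFun h1' i; have e2 := congrFun hx₀' i
      linear_combination e1 - e2
    set t := P ^ ℓ * (s₁ - s₀) with ht
    set t' := P ^ ℓ * (s₁' - s₀') with ht'
    have e0 : t = t' * a' 0 := by
      have k1 := key 0; have k2 := key' 0
      rw [ha0] at k1
      linear_combination k2 - k1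
    have e1 : t' = t * a 1 := by
      have k1 := key 1; have k2 := key' 1
      rw [ha1'] at k2
      linear_combination k1 - k2
    have hu : ¬IsUnit (a' 0 * a 1) := fun h => ha0' (isUnit_of_mul_isUnit_left h)
    have hcancel : t' * (1 - a' 0 * a 1) = 0 := by
      linear_combination e1 + (a 1) * e0 - t' * (mul_comm (a' 0) (a 1))
    have ht'0 : t' = 0 :=
      ((IsLocalRing.isUnit_one_sub_self_of_mem_nonunits _ hu).mul_left_eq_zero).mp hcancel
    have ht0 : t = 0 := by rw [e0, ht'0, zero_mul]
    have : x = x₀ := funext fun i => by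
      have k := key i
      rw [ht0] at k
      linear_combination k
    exact this
  · rintro rfl
    exact ⟨⟨s₀, hx₀⟩, ⟨s₀', hx₀'⟩⟩

lemma v_eq_zero (π : R) (hπ : Irreducible π) {n v : ℕ}
    (hle : (Ideal.span {π} : Ideal R) ^ n ≤ (Ideal.span {π} : Ideal R) ^ v)
    (a a' : Fin 2 → R ⧸ (Ideal.span {π} : Ideal R) ^ n)
    (ha0 : a 0 = 1) (ha0' : ¬IsUnit (a' 0))
    (hveq : ∀ i, Ideal.Quotient.factor hle (a i) = Ideal.Quotient.factor hle (a' i)) :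
    v = 0 := by
  by_contra hv
  obtain ⟨e', he'⟩ := Ideal.Quotient.mk_surjective (a' 0)
  have h0 := hveq 0
  rw [ha0, ← he', Ideal.Quotient.factor_mk, ← map_one (Ideal.Quotient.mk _),
    Ideal.Quotient.factor_mk, Ideal.Quotient.mk_eq_mk_iff_sub_mem,
    Ideal.span_singleton_pow, Ideal.mem_span_singleton] at h0
  obtain ⟨c, hc⟩ := h0
  have hmem : π ^ v * c ∈ IsLocalRing.maximalIdeal R := by
    rw [hπ.maximalIdeal_eq]
    exact Ideal.mul_mem_right _ _ (Ideal.pow_mem_of_mem _ (Ideal.mem_span_singleton_self π) v (by omega))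
  have : IsUnit e' := by
    by_contra he
    have : e' ∈ IsLocalRing.maximalIdeal R := IsLocalRing.mem_maximalIdeal e' |>.mpr he
    have h1 : (1 : R) ∈ IsLocalRing.maximalIdeal R := by
      have := Ideal.add_mem _ this hmem
      rwa [show e' + π ^ v * c = 1 from by linear_combination -hc] at this
    exact (IsLocalRing.maximalIdeal.isMaximal R).ne_top (Ideal.eq_top_of_isUnit_mem _ h1 isUnit_one)
  exact ha0' (he' ▸ this.map (Ideal.Quotient.mk _))

end Aux



/-- In `R_n = R/(π)^n` (`R` a complete discrete valuation ring, residue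
cardinality `q`, `ℓ ≤ n`): (a) every segment `{t·can_n(a) + b : t ∈ π^ℓ R_n}` of length
`q^{-ℓ}` in a direction `a ∈ ℙ^1(R_n)` has exactly `q^{n-ℓ}` elements; (b) the
intersection of two such segments in directions `a`, `a'` is either empty or has exactly
`q^{min(n-ℓ, v_n(a,a'))}` elements, where `v_n(a,a')` is the largest `v ≤ n` such that the
canonical representatives of `a` and `a'` agree modulo `(π)^v`. -/
theorem segment_card_and_intersection
    (R : Type*) [CommRing R] [IsDomain R] [IsDiscreteValuationRing R]
    [IsAdicComplete (IsLocalRing.maximalIdeal R) R]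
    [Finite (IsLocalRing.ResidueField R)]
    (q : ℕ) (hq : q = Nat.card (IsLocalRing.ResidueField R))
    (π : R) (hπ : Irreducible π)
    (n ℓ : ℕ) (hn : 1 ≤ n) (hℓ : ℓ ≤ n)
    (a a' : Fin 2 → R ⧸ (Ideal.span {π} : Ideal R) ^ n)
    (haCan : ∃ j, a j = 1 ∧ ∀ i < j, ¬IsUnit (a i))
    (haCan' : ∃ j, a' j = 1 ∧ ∀ i < j, ¬IsUnit (a' i))
    (b b' : Fin 2 → R ⧸ (Ideal.span {π} : Ideal R) ^ n)
    (S S' : Set (Fin 2 → R ⧸ (Ideal.span {π} : Ideal R) ^ n))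
    (hS : S = {x | ∃ s : R ⧸ (Ideal.span {π} : Ideal R) ^ n,
      x = fun i => (Ideal.Quotient.mk _ π) ^ ℓ * s * a i + b i})
    (hS' : S' = {x | ∃ s : R ⧸ (Ideal.span {π} : Ideal R) ^ n,
      x = fun i => (Ideal.Quotient.mk _ π) ^ ℓ * s * a' i + b' i})
    (v : ℕ) (hvle : v ≤ n)
    (hveq : ∀ i,
      Ideal.Quotient.factor (Ideal.pow_le_pow_right hvle) (a i) =
      Ideal.Quotient.factor (Ideal.pow_le_pow_right hvle) (a' i))
    (hvmax : ∀ h : v + 1 ≤ n, ¬ ∀ i,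
      Ideal.Quotient.factor (Ideal.pow_le_pow_right h) (a i) =
      Ideal.Quotient.factor (Ideal.pow_le_pow_right h) (a' i)) :
    Nat.card S = q ^ (n - ℓ) ∧
    (S ∩ S' = ∅ ∨ Nat.card ↥(S ∩ S') = q ^ (min (n - ℓ) v)) := by
  obtain ⟨j, hj1, hjm⟩ := haCan
  obtain ⟨j', hj1', hjm'⟩ := haCan'
  have parta : Nat.card S = q ^ (n - ℓ) := by
    rw [hS, card_segment π hπ hℓ a b j hj1, card_quot π hπ, hq]
  refine ⟨parta, ?_⟩
  by_cases hSS : S ∩ S' = ∅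
  · exact Or.inl hSS
  right
  obtain ⟨x₀, hx₀S, hx₀S'⟩ := Set.nonempty_iff_ne_empty.mpr hSS
  rw [hS] at hx₀S; rw [hS'] at hx₀S'
  obtain ⟨s₀, hx₀⟩ := hx₀S
  obtain ⟨s₀', hx₀'⟩ := hx₀S'
  choose e he using fun i => Ideal.Quotient.mk_surjective (a i)
  choose e' he' using fun i => Ideal.Quotient.mk_surjective (a' i)
  have hvd : ∀ i, π ^ v ∣ e i - e' i := by
    intro i
    have h := hveq i
    rw [← he i, ← he' i, Ideal.Quotient.factor_mk, Ideal.Quotient.factor_mk,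
      Ideal.Quotient.mk_eq_mk_iff_sub_mem, Ideal.span_singleton_pow,
      Ideal.mem_span_singleton] at h
    exact h
  have hdiff : ∀ i, a i - a' i = Ideal.Quotient.mk _ (e i - e' i) := by
    intro i; rw [map_sub, he, he']
  have H1 : ∀ i, (Ideal.Quotient.mk ((Ideal.span {π} : Ideal R) ^ n) π) ^ (n - v) *
      (a i - a' i) = 0 := by
    intro i
    obtain ⟨c, hc⟩ := hvd i
    rw [hdiff i, hc, ← map_pow, ← map_mul, aux_mk_eq_zero]
    exact ⟨c, by rw [← mul_assoc, ← pow_add]; congr 2; omega⟩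
  have H2 : ∀ t : R ⧸ (Ideal.span {π} : Ideal R) ^ n, (∀ i, t * (a i - a' i) = 0) →
      ∃ s, t = (Ideal.Quotient.mk _ π) ^ (n - v) * s := by
    intro t ht
    rcases eq_or_lt_of_le hvle with rfl | hvn
    · exact ⟨t, by rw [Nat.sub_self, pow_zero, one_mul]⟩
    · have hmax := hvmax hvn
      push_neg at hmax
      obtain ⟨i₀, hi₀⟩ := hmax
      have hndvd : ¬ π ^ (v+1) ∣ e i₀ - e' i₀ := by
        rintro ⟨c, hc⟩
        apply hi₀
        rw [← he i₀, ← he' i₀, Ideal.Quotient.factor_mk, Ideal.Quotient.factor_mk,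
          Ideal.Quotient.mk_eq_mk_iff_sub_mem, Ideal.span_singleton_pow,
          Ideal.mem_span_singleton]
        exact ⟨c, hc⟩
      obtain ⟨f, hf⟩ := hvd i₀
      have hfu : IsUnit f := by
        by_contra hfnu
        obtain ⟨c, hc⟩ := Ideal.mem_span_singleton.mp
          (hπ.maximalIdeal_eq ▸ (IsLocalRing.mem_maximalIdeal f).mpr hfnu)
        exact hndvd ⟨c, by rw [hf, hc, pow_succ, mul_assoc]⟩
      obtain ⟨g, hg⟩ := Ideal.Quotient.mk_surjective t
      have h0 := ht i₀
      rw [hdiff i₀, ← hg, hf, ← map_mul, aux_mk_eq_zero, ← mul_assoc,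
        IsUnit.dvd_mul_right hfu, mul_comm, aux_dvd_cancel hπ hvle] at h0
      obtain ⟨s, hs⟩ := h0
      exact ⟨Ideal.Quotient.mk _ s, by rw [← hg, hs, map_mul, map_pow]⟩
  have hmaxle : max ℓ (n - v) ≤ n := max_le hℓ (Nat.sub_le n v)
  fin_cases j <;> fin_cases j'
  · -- p = 0, p = 0
    rw [hS, hS', inter_eq π hℓ hvle a a' b b' 0 hj1 hj1' H1 H2 x₀ s₀ hx₀ s₀' hx₀',
      card_segment π hπ hmaxle a x₀ 0 hj1, card_quot π hπ, hq]
    congr 1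
    omega
  · -- j = 0, j' = 1 : different pivots
    have h0' : ¬IsUnit (a' 0) := hjm' 0 (by decide)
    have hv0 : v = 0 := v_eq_zero π hπ (Ideal.pow_le_pow_right hvle) a a' hj1 h0' hveq
    rw [hS, hS', inter_singleton π hπ hn a a' b b' hj1 hj1' h0' x₀ s₀ hx₀ s₀' hx₀', hv0]
    simp
  · -- j = 1, j' = 0 : different pivots, swapped
    have h0 : ¬IsUnit (a 0) := hjm 0 (by decide)
    have hv0 : v = 0 := v_eq_zero π hπ (Ideal.pow_le_pow_right hvle) a' a hj1' h0
      (fun i => (hveq i).symm)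
    rw [hS, hS', Set.inter_comm,
      inter_singleton π hπ hn a' a b' b hj1' hj1 h0 x₀ s₀' hx₀' s₀ hx₀, hv0]
    simp
  · -- p = 1, p = 1
    rw [hS, hS', inter_eq π hℓ hvle a a' b b' 1 hj1 hj1' H1 H2 x₀ s₀ hx₀ s₀' hx₀',
      card_segment π hπ hmaxle a x₀ 1 hj1, card_quot π hπ, hq]
    congr 1
    omega
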